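/- With the notation of the previous construction, if 𝓜 is a nontrivial proper closed subspace, a ∈ [0,1], and ν is chosen with ∫ |x| dν = ∞, then for every φ ∈ 𝓜 and every k ≥ 1, the function x ↦ xᵏ is integrable with respect to the complex measure B ↦ ⟨ψ, E^ν(B)φ⟩ for all ψ ∈ H, and ∫ xᵏ d⟨ψ, E^ν(·)φ⟩ = a⟨ψ, φ⟩. Hence E^ν[k] restricted to 𝓜 equals a·I|_𝓜 for all k ≥ 1, independently of ν. -/

import Mathlib

open MeasureTheory ContinuousLinearMap

noncomputable section

/-- A normalized positive operator measure (POM): positive operator valued,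
normalized, and countably additive in the weak operator topology. -/
structure POM (Ω : Type*) [MeasurableSpace Ω] (H : Type*) [NormedAddCommGroup H]
    [InnerProductSpace ℂ H] [CompleteSpace H] where
  toFun : Set Ω → H →L[ℂ] H
  pos : ∀ s : Set Ω, (toFun s).IsPositive
  normalized : toFun Set.univ = 1
  weakly_additive : ∀ f : ℕ → Set Ω, (∀ n, MeasurableSet (f n)) →
    Pairwise (Function.onFun Disjoint f) →
    ∀ ψ φ : H, HasSum (fun n => (inner ℂ ψ (toFun (f n) φ) : ℂ))
      (inner ℂ ψ (toFun (⋃ n, f n) φ))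

/-- With $E^ν(B) = μ(B)P + ν(B)(I-P)$, $μ = (1-a)δ₀ + aδ₁$, $P$ a nontrivial
proper projection and $∫|x|dν = ∞$: for every $φ$ in the range of $P$ and every $k ≥ 1$,
the complex measure $B ↦ ⟨ψ, E^ν(B)φ⟩$ equals $⟨ψ,φ⟩μ$, the function $x^k$ is
$μ$-integrable with $∫ x^k dμ = a$, and hence
$∫ x^k d⟨ψ, E^ν(·)φ⟩ = a⟨ψ,φ⟩$: the moment operators restricted to the range of $P$
are $a·I$, independently of $ν$. -/
theorem statement6 {H : Type*} [NormedAddCommGroup H] [InnerProductSpace ℂ H]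
    [CompleteSpace H] (P : H →L[ℂ] H) (hP : IsSelfAdjoint P) (hP2 : IsIdempotentElem P)
    (hP0 : P ≠ 0) (hP1 : P ≠ 1)
    (a : ℝ) (ha0 : 0 ≤ a) (ha1 : a ≤ 1)
    (μ : Measure ℝ)
    (hμ : μ = ENNReal.ofReal (1 - a) • Measure.dirac (0 : ℝ) +
              ENNReal.ofReal a • Measure.dirac (1 : ℝ))
    (ν : Measure ℝ) [IsProbabilityMeasure ν]
    (hν : ¬ Integrable (fun x : ℝ => |x|) ν)
    (E : POM ℝ H)
    (hE : ∀ B : Set ℝ,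
      E.toFun B = ((μ B).toReal : ℂ) • P + ((ν B).toReal : ℂ) • ((1 : H →L[ℂ] H) - P)) :
    ∀ k : ℕ, 1 ≤ k →
      Integrable (fun x : ℝ => x ^ k) μ ∧
      (∫ x, x ^ k ∂μ) = a ∧
      ∀ φ : H, P φ = φ → ∀ ψ : H,
        (∀ B : Set ℝ, (inner ℂ ψ (E.toFun B φ) : ℂ) = ((μ B).toReal : ℂ) * inner ℂ ψ φ) ∧
        ((∫ x, x ^ k ∂μ : ℝ) : ℂ) * inner ℂ ψ φ = (a : ℂ) * inner ℂ ψ φ := by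
  intro k hk
  subst hμ
  have hint : Integrable (fun x : ℝ => x ^ k)
      (ENNReal.ofReal (1 - a) • Measure.dirac (0 : ℝ) +
       ENNReal.ofReal a • Measure.dirac (1 : ℝ)) := by
    refine Integrable.add_measure ?_ ?_ <;>
    · refine Integrable.smul_measure ?_ ENNReal.ofReal_ne_top
      exact (integrable_const _).congr (by
        rw [MeasureTheory.ae_dirac_eq]
        exact Filter.eventually_pure.mpr rfl)
  have hintegral : (∫ x, x ^ k ∂(ENNReal.ofReal (1 - a) • Measure.dirac (0 : ℝ) +
       ENNReal.ofReal a • Measure.dirac (1 : ℝ))) = a := by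
    rw [integral_add_measure (hint.mono_measure (Measure.le_add_right le_rfl))
        (hint.mono_measure (Measure.le_add_left le_rfl)),
        integral_smul_measure, integral_smul_measure,
        integral_dirac, integral_dirac]
    simp [zero_pow (Nat.one_le_iff_ne_zero.mp hk), one_pow,
      ENNReal.toReal_ofReal ha0, ENNReal.toReal_ofReal (by linarith : (0:ℝ) ≤ 1 - a)]
  refine ⟨hint, hintegral, ?_⟩
  intro φ hφ ψ
  constructor
  · intro B
    rw [hE B]
    have h1 : ((1 : H →L[ℂ] H) - P) φ = 0 := by
      simp [ContinuousLinearMap.sub_apply, hφ]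
    simp only [ContinuousLinearMap.add_apply, ContinuousLinearMap.smul_apply, h1,
      smul_zero, add_zero, hφ, ← Complex.coe_smul, inner_smul_right]
  · rw [hintegral]
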